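/- Let M be a non-trivial complete lattice, S and X non-empty sets, and B a bounded subposet of M^S. Let P = (P_x)_{x∈X} and T = (T_x)_{x∈X} with P_x, T_x : B → M^S order-preserving maps satisfying P_x(a) ≤ b iff a ≤ T_x(b) for all a, b ∈ B and x ∈ X. If P_x(B) ⊆ B and T_x(B) ⊆ B for all x ∈ X, then the labelled induced relations coincide: ⋃_{x∈X} {x} × R_{T_x} = ⋃_{x∈X} {x} × R^{P_x}, i.e., for every x, R_{T_x} = R^{P_x}. -/
import Mathlib

/-- For families (P_x), (T_x) of order-preserving maps on B
forming Galois pairs, if P_x(B) ⊆ B and T_x(B) ⊆ B for all x, then the labelled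
induced relations coincide: for every x, R_{T_x} = R^{P_x}. -/
theorem stmt12 {M S X : Type*} [CompleteLattice M] (hM : (⊥ : M) ≠ ⊤)
    [Nonempty S] [Nonempty X]
    (B : Set (S → M))
    (hB0 : (fun _ => (⊥ : M)) ∈ B) (hB1 : (fun _ => (⊤ : M)) ∈ B)
    (P T : X → (S → M) → (S → M))
    (hP : ∀ x, ∀ a ∈ B, ∀ a' ∈ B, a ≤ a' → P x a ≤ P x a')
    (hT : ∀ x, ∀ b ∈ B, ∀ b' ∈ B, b ≤ b' → T x b ≤ T x b')
    (galois : ∀ x, ∀ a ∈ B, ∀ b ∈ B, (P x a ≤ b ↔ a ≤ T x b))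
    (hPB : ∀ x, ∀ a ∈ B, P x a ∈ B) (hTB : ∀ x, ∀ b ∈ B, T x b ∈ B) :
    ∀ x : X,
      {p : S × S | ∀ b ∈ B, T x b p.1 ≤ b p.2} =
        {p : S × S | ∀ a ∈ B, a p.1 ≤ P x a p.2} := by
  intro x
  ext ⟨s, t⟩
  simp only [Set.mem_setOf_eq]
  constructor
  · intro h a ha
    have hunit : a ≤ T x (P x a) :=
      (galois x a ha (P x a) (hPB x a ha)).mp le_rfl
    exact le_trans (hunit s) (h (P x a) (hPB x a ha))
  · intro h b hb
    have hcounit : P x (T x b) ≤ b :=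
      (galois x (T x b) (hTB x b hb) b hb).mpr le_rfl
    exact le_trans (h (T x b) (hTB x b hb)) (hcounit t)
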